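/- Let Γ be a set of cardinality 2^ω. For every ε > 0 the unit sphere of c₀(Γ) is the union of countably many sets each of diameter at most 1 + ε. Consequently, for every uncountable cardinal κ ≤ 2^ω the unit sphere of c₀(κ) is dichotomous. -/
import Mathlib


open scoped ENNReal

/-- `c₀(Γ)`, realized as the set of those bounded functions `x ∈ ℓ∞(Γ)` such that
`{γ : ε ≤ |x γ|}` is finite for every `ε > 0` (the norm is the sup norm of `ℓ∞(Γ)`). -/
def c0Set (Γ : Type) : Set (lp (fun _ : Γ => ℝ) ∞) :=
  {x | ∀ ε : ℝ, 0 < ε → {γ : Γ | ε ≤ |x γ|}.Finite}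

/-- The unit sphere of `c₀(Γ)`. -/
def c0Sphere (Γ : Type) : Set (lp (fun _ : Γ => ℝ) ∞) :=
  {x | x ∈ c0Set Γ ∧ ‖x‖ = 1}

/-- A subset `M` of a normed space is dichotomous if for every `r` with
`0 < r ≤ diam M`, either `M` admits an uncountable `(r+)`-separated subset,
or `M` is the union of countably many sets each of diameter at most `r`. -/
def Dichotomous {X : Type*} [NormedAddCommGroup X] (M : Set X) : Prop :=
  ∀ r : ℝ, 0 < r → r ≤ Metric.diam M →
    (∃ N ⊆ M, ¬N.Countable ∧ ∀ x ∈ N, ∀ y ∈ N, x ≠ y → r < ‖x - y‖) ∨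
    (∃ f : ℕ → Set X, (⋃ n, f n) = M ∧ ∀ n, Metric.diam (f n) ≤ r)

set_option maxHeartbeats 1000000

section Aux

/-- For any injection `e : Γ → ℝ` and any finite `F ⊆ Γ`, some map
`γ ↦ ⌊(m+1) * e γ⌋` is injective on `F`. -/
lemma exists_good_m {Γ : Type} (e : Γ → ℝ) (he : Function.Injective e)
    (F : Set Γ) (hF : F.Finite) :
    ∃ m : ℕ, Set.InjOn (fun γ => ⌊((m : ℝ) + 1) * e γ⌋) F := by
  classical
  set P : Finset (Γ × Γ) := (hF.toFinset ×ˢ hF.toFinset).filter fun p => p.1 ≠ p.2 with hP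
  refine ⟨P.sup fun p => ⌈|e p.1 - e p.2|⁻¹⌉₊, ?_⟩
  set m : ℕ := P.sup fun p => ⌈|e p.1 - e p.2|⁻¹⌉₊ with hm
  have hkey : ∀ p ∈ P, (1 : ℝ) / (m + 1) < |e p.1 - e p.2| := by
    intro p hp
    have hne : p.1 ≠ p.2 := (Finset.mem_filter.mp hp).2
    have hpos : 0 < |e p.1 - e p.2| := abs_pos.mpr (sub_ne_zero.mpr fun h => hne (he h))
    have h2' : ⌈|e p.1 - e p.2|⁻¹⌉₊ ≤ m := Finset.le_sup (f := fun p => ⌈|e p.1 - e p.2|⁻¹⌉₊) hp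
    have h1 : |e p.1 - e p.2|⁻¹ ≤ (⌈|e p.1 - e p.2|⁻¹⌉₊ : ℝ) := Nat.le_ceil _
    have h2 : (⌈|e p.1 - e p.2|⁻¹⌉₊ : ℝ) ≤ (m : ℝ) := Nat.cast_le.mpr h2'
    have h3 : |e p.1 - e p.2|⁻¹ < (m : ℝ) + 1 := by linarith
    have h4 := inv_strictAnti₀ (inv_pos.mpr hpos) h3
    rw [inv_inv] at h4
    rw [one_div]
    exact h4
  intro γ hγ γ' hγ' hcc
  by_contra hne
  have hPm : (γ, γ') ∈ P := by
    refine Finset.mem_filter.mpr ⟨Finset.mem_product.mpr ⟨?_, ?_⟩, hne⟩ <;>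
      simp only [Set.Finite.mem_toFinset] <;> assumption
  have h1 := hkey _ hPm
  have h2 : |((m : ℝ) + 1) * e γ - ((m : ℝ) + 1) * e γ'| < 1 :=
    Int.abs_sub_lt_one_of_floor_eq_floor hcc
  rw [← mul_sub, abs_mul] at h2
  have hm1 : (0 : ℝ) < (m : ℝ) + 1 := by positivity
  rw [abs_of_pos hm1] at h2
  have h5 : (1 : ℝ) / (m + 1) < |e γ - e γ'| := h1
  have h6 : 1 < |e γ - e γ'| * ((m : ℝ) + 1) := (div_lt_iff₀ hm1).mp h5
  have h7 : |e γ - e γ'| * ((m : ℝ) + 1) = ((m : ℝ) + 1) * |e γ - e γ'| := mul_comm _ _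
  linarith

lemma apply_le_one {Γ : Type} {x : lp (fun _ : Γ => ℝ) ∞} (hx : ‖x‖ = 1) (γ : Γ) :
    |x γ| ≤ 1 := by
  have := lp.norm_apply_le_norm (ENNReal.top_ne_zero) x γ
  rwa [Real.norm_eq_abs, hx] at this

/-- If `Γ` injects into `ℝ`, the sphere of `c₀(Γ)` is a countable union of
sets of diameter at most `1 + ε`. -/
lemma decomp (Γ : Type) (e : Γ → ℝ) (he : Function.Injective e) (ε : ℝ) (hε : 0 < ε) :
    ∃ f : ℕ → Set (lp (fun _ : Γ => ℝ) ∞),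
      (⋃ n, f n) = c0Sphere Γ ∧ ∀ n, Metric.diam (f n) ≤ 1 + ε := by
  classical
  set δ : ℝ := ε / 3 with hδdef
  have hδ : 0 < δ := by positivity
  set S : ℕ × List (ℤ × ℚ) → Set (lp (fun _ : Γ => ℝ) ∞) := fun d =>
    {x | x ∈ c0Sphere Γ ∧
        (∀ γ, δ ≤ |x γ| → ∃ p ∈ d.2, p.1 = ⌊((d.1 : ℝ) + 1) * e γ⌋) ∧
        (∀ γ, δ ≤ |x γ| → ∀ p ∈ d.2, p.1 = ⌊((d.1 : ℝ) + 1) * e γ⌋ → |x γ - (p.2 : ℝ)| ≤ δ)}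
    with hS
  obtain ⟨g, hg⟩ := exists_surjective_nat (ℕ × List (ℤ × ℚ))
  refine ⟨fun n => S (g n), ?_, ?_⟩
  · rw [hg.iUnion_comp S]
    apply Set.Subset.antisymm
    · exact Set.iUnion_subset fun d x hx => hx.1
    · intro x hx
      have hFfin : {γ : Γ | δ ≤ |x γ|}.Finite := hx.1 δ hδ
      obtain ⟨m, hinj⟩ := exists_good_m e he _ hFfin
      choose q hq using fun γ => exists_rat_near (x γ) hδ
      refine Set.mem_iUnion.mpr
        ⟨(m, hFfin.toFinset.toList.map fun γ => (⌊((m : ℝ) + 1) * e γ⌋, q γ)), hx, ?_, ?_⟩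
      · intro γ hγ
        refine ⟨(⌊((m : ℝ) + 1) * e γ⌋, q γ), List.mem_map.mpr ⟨γ, ?_, rfl⟩, rfl⟩
        rw [Finset.mem_toList, Set.Finite.mem_toFinset]
        exact hγ
      · intro γ hγ p hp hpk
        obtain ⟨γ', hγ', rfl⟩ := List.mem_map.mp hp
        rw [Finset.mem_toList, Set.Finite.mem_toFinset] at hγ'
        have : γ' = γ := hinj hγ' hγ hpk
        subst this
        exact (hq γ').le
  · intro n
    apply Metric.diam_le_of_forall_dist_le (by positivity)
    rintro x hx y hy
    obtain ⟨hxs, hxex, hxall⟩ := hx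
    obtain ⟨hys, hyex, hyall⟩ := hy
    rw [dist_eq_norm]
    apply lp.norm_le_of_forall_le (by positivity)
    intro γ
    have hsub : (x - y) γ = x γ - y γ := by
      rw [lp.coeFn_sub]; rfl
    rw [Real.norm_eq_abs, hsub]
    have hx1 : |x γ| ≤ 1 := apply_le_one hxs.2 γ
    have hy1 : |y γ| ≤ 1 := apply_le_one hys.2 γ
    have habs := abs_sub (x γ) (y γ)
    by_cases hgx : δ ≤ |x γ| <;> by_cases hgy : δ ≤ |y γ|
    · obtain ⟨p, hpL, hpk⟩ := hxex γ hgx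
      have h1 := hxall γ hgx p hpL hpk
      have h2 := hyall γ hgy p hpL hpk
      have h3 : |x γ - y γ| ≤ |x γ - (p.2 : ℝ)| + |(p.2 : ℝ) - y γ| := abs_sub_le _ _ _
      rw [abs_sub_comm (p.2 : ℝ) (y γ)] at h3
      linarith
    · push_neg at hgy; linarith
    · push_neg at hgx; linarith
    · push_neg at hgx hgy; linarith

/-- The sphere of `c₀(Γ')` for uncountable `Γ'` contains an uncountable
`(1+)`-separated subset. -/
lemma sep (Γ' : Type) (hunc : ¬Countable Γ') :
    ∃ N ⊆ c0Sphere Γ', ¬N.Countable ∧ ∀ x ∈ N, ∀ y ∈ N, x ≠ y → 1 < ‖x - y‖ := by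
  classical
  have huc : Uncountable Γ' := not_countable_iff.mp hunc
  set α := (Cardinal.aleph 1).ord.ToType with hα
  have hmkα : Cardinal.mk α = Cardinal.aleph 1 := Cardinal.mk_ord_toType _
  have hαunc : ¬Countable α := by
    intro h
    have := Cardinal.mk_le_aleph0_iff.mpr h
    rw [hmkα] at this
    exact absurd (lt_of_lt_of_le Cardinal.aleph0_lt_aleph_one this) (lt_irrefl _)
  have hle : Cardinal.mk α ≤ Cardinal.mk Γ' := by
    rw [hmkα, ← Cardinal.succ_aleph0]
    exact Order.succ_le_of_lt (Cardinal.aleph0_lt_mk_iff.mpr huc)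
  obtain ⟨emb⟩ := (Cardinal.le_def α Γ').mp hle
  have hsel : ∀ x : α, ∃ n : (Set.Iio x) → ℕ, Function.Injective n := fun x =>
    Set.countable_iff_exists_injective.mp
      ((Cardinal.countable_iff_lt_aleph_one _).mpr (Cardinal.mk_Iio_ord_toType x))
  choose nf hnf using hsel
  set v : α → Γ' → ℝ := fun x γ =>
    if γ = emb x then 1
    else if h : ∃ y : Set.Iio x, emb y.1 = γ then -(1 / ((nf x h.choose : ℝ) + 2)) else 0
    with hv
  have hvbound : ∀ x γ, |v x γ| ≤ 1 := by
    intro x γ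
    rw [hv]
    dsimp only
    split_ifs with h1 h2
    · simp
    · rw [abs_neg, abs_of_nonneg (by positivity)]
      rw [div_le_one (by positivity)]
      have : (0 : ℝ) ≤ (nf x h2.choose : ℝ) := Nat.cast_nonneg _
      linarith
    · simp
  have hvself : ∀ x, v x (emb x) = 1 := fun x => if_pos rfl
  have hvlt : ∀ x y : α, y < x → ∃ k : ℕ, v x (emb y) = -(1 / ((k : ℝ) + 2)) := by
    intro x y hyx
    have hne : emb y ≠ emb x := fun h => absurd (emb.injective h) (ne_of_lt hyx)
    have hex : ∃ z : Set.Iio x, emb z.1 = emb y := ⟨⟨y, hyx⟩, rfl⟩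
    refine ⟨nf x hex.choose, ?_⟩
    rw [hv]
    dsimp only
    rw [if_neg hne, dif_pos hex]
  have hmem : ∀ x, Memℓp (v x) ∞ := by
    intro x
    apply memℓp_infty
    refine ⟨1, ?_⟩
    rintro _ ⟨γ, rfl⟩
    simpa [Real.norm_eq_abs] using hvbound x γ
  set V : α → lp (fun _ : Γ' => ℝ) ∞ := fun x => ⟨v x, hmem x⟩ with hV
  have hVapp : ∀ x γ, (V x : ∀ _ : Γ', ℝ) γ = v x γ := fun x γ => rfl
  have hVsphere : ∀ x, V x ∈ c0Sphere Γ' := by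
    intro x
    constructor
    · intro ε hε
      have hsubset : {γ : Γ' | ε ≤ |(V x : ∀ _ : Γ', ℝ) γ|} ⊆
          {emb x} ∪ (fun y : Set.Iio x => emb y.1) ''
            (nf x ⁻¹' ↑(Finset.range (⌈1 / ε⌉₊ + 1))) := by
        intro γ hγ
        simp only [Set.mem_setOf_eq, hVapp] at hγ
        by_cases h1 : γ = emb x
        · exact Or.inl h1
        · right
          rw [hv] at hγ
          dsimp only at hγ
          rw [if_neg h1] at hγ
          by_cases h2 : ∃ y : Set.Iio x, emb y.1 = γ
          · rw [dif_pos h2, abs_neg, abs_of_nonneg (by positivity)] at hγ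
            refine ⟨h2.choose, ?_, h2.choose_spec⟩
            simp only [Set.mem_preimage, Finset.coe_range, Set.mem_Iio]
            have hd : (0:ℝ) < (nf x h2.choose : ℝ) + 2 := by positivity
            have : (nf x h2.choose : ℝ) + 2 ≤ 1 / ε := by
              rw [le_div_iff₀ hε]
              calc ((nf x h2.choose : ℝ) + 2) * ε
                  ≤ ((nf x h2.choose : ℝ) + 2) * (1 / ((nf x h2.choose : ℝ) + 2)) := by
                    apply mul_le_mul_of_nonneg_left hγ (le_of_lt hd)
                _ = 1 := by field_simp
            have h3 : (nf x h2.choose : ℝ) ≤ 1 / ε := by linarith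
            have h4 : (nf x h2.choose : ℝ) ≤ (⌈1 / ε⌉₊ : ℝ) := h3.trans (Nat.le_ceil _)
            have h5 : nf x h2.choose ≤ ⌈1 / ε⌉₊ := Nat.cast_le.mp h4
            omega
          · rw [dif_neg h2] at hγ
            simp at hγ
            linarith
      refine Set.Finite.subset ?_ hsubset
      apply Set.Finite.union (Set.finite_singleton _)
      apply Set.Finite.image
      exact Set.Finite.preimage (Set.injOn_of_injective (hnf x)) (Finset.finite_toSet _)
    · apply le_antisymm
      · apply lp.norm_le_of_forall_le zero_le_one
        intro γ
        simpa [hVapp, Real.norm_eq_abs] using hvbound x γ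
      · have h := lp.norm_apply_le_norm (ENNReal.top_ne_zero) (V x) (emb x)
        rwa [Real.norm_eq_abs, hVapp, hvself, abs_one] at h
  have hsep : ∀ x y : α, y < x → 1 < ‖V x - V y‖ := by
    intro x y hyx
    obtain ⟨k, hk⟩ := hvlt x y hyx
    have h := lp.norm_apply_le_norm (ENNReal.top_ne_zero) (V x - V y) (emb y)
    have hsub : (V x - V y : lp (fun _ : Γ' => ℝ) ∞) (emb y) = v x (emb y) - v y (emb y) := by
      rw [lp.coeFn_sub]; rfl
    rw [Real.norm_eq_abs, hsub, hk, hvself y] at h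
    have : |-(1 / ((k : ℝ) + 2)) - 1| = 1 + 1 / ((k : ℝ) + 2) := by
      rw [abs_of_nonpos (by
        have : (0:ℝ) < 1 / ((k : ℝ) + 2) := by positivity
        linarith)]
      ring
    rw [this] at h
    have hpos : (0:ℝ) < 1 / ((k : ℝ) + 2) := by positivity
    linarith
  have hVinj : Function.Injective V := by
    intro x y hxy
    by_contra hne
    rcases lt_or_gt_of_ne hne with h | h
    · have := hsep y x h
      rw [hxy, sub_self, norm_zero] at this
      linarith
    · have := hsep x y h
      rw [hxy, sub_self, norm_zero] at this
      linarith
  refine ⟨Set.range V, ?_, ?_, ?_⟩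
  · rintro _ ⟨x, rfl⟩
    exact hVsphere x
  · intro hc
    apply hαunc
    have : Countable (Set.range V) := Set.countable_coe_iff.mpr hc
    exact Countable.of_equiv _ (Equiv.ofInjective V hVinj).symm
  · rintro _ ⟨x, rfl⟩ _ ⟨y, rfl⟩ hxy
    have hne : x ≠ y := fun h => hxy (congrArg V h)
    rcases lt_or_gt_of_ne hne with h | h
    · rw [norm_sub_rev]
      exact hsep y x h
    · exact hsep x y h

end Aux

/- STATEMENT 16: If `Γ` has cardinality `2^ω`, then for every `ε > 0` the unit sphere
of `c₀(Γ)` is the union of countably many sets each of diameter at most `1 + ε`.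
Consequently, for every uncountable `Γ'` of cardinality at most `2^ω` the unit sphere
of `c₀(Γ')` is dichotomous. -/
theorem stmt16 :
    (∀ Γ : Type, Cardinal.mk Γ = Cardinal.continuum → ∀ ε : ℝ, 0 < ε →
      ∃ f : ℕ → Set (lp (fun _ : Γ => ℝ) ∞),
        (⋃ n, f n) = c0Sphere Γ ∧ ∀ n, Metric.diam (f n) ≤ 1 + ε) ∧
    (∀ Γ' : Type, ¬Countable Γ' → Cardinal.mk Γ' ≤ Cardinal.continuum →
      Dichotomous (c0Sphere Γ')) := by
  have hdec : ∀ Γ : Type, Cardinal.mk Γ ≤ Cardinal.continuum → ∀ ε : ℝ, 0 < ε →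
      ∃ f : ℕ → Set (lp (fun _ : Γ => ℝ) ∞),
        (⋃ n, f n) = c0Sphere Γ ∧ ∀ n, Metric.diam (f n) ≤ 1 + ε := by
    intro Γ hΓ ε hε
    have h : Cardinal.mk Γ ≤ Cardinal.mk ℝ := by rwa [Cardinal.mk_real]
    obtain ⟨e⟩ := (Cardinal.le_def Γ ℝ).mp h
    exact decomp Γ e e.injective ε hε
  refine ⟨fun Γ hΓ => hdec Γ hΓ.le, fun Γ' hc hle => ?_⟩
  intro r hr hrd
  rcases le_or_gt r 1 with h1 | h1
  · left
    obtain ⟨N, hN, hNc, hNsep⟩ := sep Γ' hc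
    exact ⟨N, hN, hNc, fun x hx y hy hxy => lt_of_le_of_lt h1 (hNsep x hx y hy hxy)⟩
  · right
    obtain ⟨f, hf1, hf2⟩ := hdec Γ' hle (r - 1) (by linarith)
    refine ⟨f, hf1, fun n => ?_⟩
    have := hf2 n
    linarith
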